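/- Let d ≥ 1, let ρ₀ be a correlation function on ℝ^d, let α ∈ [0,1] and λ > 0 satisfy erf(√(λ(1−α)/8)) ≤ 1/√2, and set ρ = (1−α)ρ₀ + α. Then the function x ↦ 1 − 2·(erf(√(λ(1−ρ(x))/8)))² is again a correlation function on ℝ^d. -/

import Mathlib

open Real Set Finset

/-- The error function `erf x = (2/√π) ∫₀^x e^{-y²} dy`. -/
noncomputable def erf (x : ℝ) : ℝ :=
  (2 / Real.sqrt Real.pi) * ∫ y in (0:ℝ)..x, Real.exp (-y ^ 2)

/-- A correlation function on `ℝ^d`: continuous, equal to `1` at the origin, even,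
and positive definite. -/
def IsCorrelationFunction (d : ℕ) (ρ : EuclideanSpace ℝ (Fin d) → ℝ) : Prop :=
  Continuous ρ ∧ ρ 0 = 1 ∧ (∀ x, ρ (-x) = ρ x) ∧
    ∀ (n : ℕ) (t : Fin n → EuclideanSpace ℝ (Fin d)) (c : Fin n → ℝ),
      0 ≤ ∑ i, ∑ j, c i * c j * ρ (t i - t j)

namespace SCorrAux

/-- The auxiliary integral `Kf v = ∫₀¹ e^{-v(1+t²)}/(1+t²) dt`. -/
noncomputable def Kf (v : ℝ) : ℝ := ∫ t in (0:ℝ)..1, Real.exp (-v * (1 + t ^ 2)) / (1 + t ^ 2)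

lemma contK (v : ℝ) : Continuous fun t : ℝ => Real.exp (-v * (1 + t ^ 2)) / (1 + t ^ 2) := by
  apply Continuous.div
  · continuity
  · continuity
  · intro t; positivity

lemma cont_exp_sq : Continuous fun y : ℝ => Real.exp (-y ^ 2) := by continuity

lemma erf_zero : erf 0 = 0 := by simp [erf]

lemma erf_nonneg (x : ℝ) (hx : 0 ≤ x) : 0 ≤ erf x :=
  mul_nonneg (by positivity) (intervalIntegral.integral_nonneg hx fun u _ => (Real.exp_pos _).le)

lemma continuous_erf : Continuous erf := by
  have h : Continuous fun x : ℝ => ∫ y in (0:ℝ)..x, Real.exp (-y ^ 2) :=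
    intervalIntegral.continuous_primitive (fun a b => cont_exp_sq.intervalIntegrable a b) 0
  exact continuous_const.mul h

lemma hEg (x : ℝ) : HasDerivAt (fun u : ℝ => ∫ y in (0:ℝ)..u, Real.exp (-y ^ 2))
    (Real.exp (-x ^ 2)) x :=
  intervalIntegral.integral_hasDerivAt_right (cont_exp_sq.intervalIntegrable 0 x)
    (cont_exp_sq.stronglyMeasurableAtFilter _ _) cont_exp_sq.continuousAt

lemma Eg_eq (x : ℝ) : x * ∫ t in (0:ℝ)..1, Real.exp (-(x * t) ^ 2)
    = ∫ y in (0:ℝ)..x, Real.exp (-y ^ 2) := by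
  rcases eq_or_ne x 0 with h | h
  · simp [h]
  · rw [intervalIntegral.integral_comp_mul_left (fun y => Real.exp (-y ^ 2)) h]
    simp [h]

lemma hasDerivAt_G (x₀ : ℝ) :
    HasDerivAt (fun x : ℝ => Kf (x ^ 2))
      (-2 * x₀ * Real.exp (-x₀ ^ 2) * ∫ t in (0:ℝ)..1, Real.exp (-(x₀ * t) ^ 2)) x₀ := by
  have hd : ∀ (t x : ℝ), HasDerivAt (fun x : ℝ => Real.exp (-x ^ 2 * (1 + t ^ 2)) / (1 + t ^ 2))
      (-2 * x * Real.exp (-x ^ 2 * (1 + t ^ 2))) x := by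
    intro t x
    have h1 : HasDerivAt (fun x : ℝ => -x ^ 2 * (1 + t ^ 2)) (-(2 * x) * (1 + t ^ 2)) x := by
      have := ((hasDerivAt_pow 2 x).neg).mul_const (1 + t ^ 2)
      simpa using this
    have h2 := (h1.exp).div_const (1 + t ^ 2)
    refine h2.congr_deriv ?_
    have ht : (1 : ℝ) + t ^ 2 ≠ 0 := by positivity
    rw [div_eq_iff ht]
    ring
  have h := (intervalIntegral.hasDerivAt_integral_of_dominated_loc_of_deriv_le
      (F := fun (x t : ℝ) => Real.exp (-x ^ 2 * (1 + t ^ 2)) / (1 + t ^ 2))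
      (F' := fun (x t : ℝ) => -2 * x * Real.exp (-x ^ 2 * (1 + t ^ 2)))
      (x₀ := x₀) (a := 0) (b := 1) (μ := MeasureTheory.volume)
      (bound := fun _ => 2 * (|x₀| + 1)) (s := Metric.ball x₀ 1)
      (Metric.ball_mem_nhds x₀ one_pos)
      (Filter.Eventually.of_forall fun x => (contK (x ^ 2)).aestronglyMeasurable)
      ((contK (x₀ ^ 2)).intervalIntegrable 0 1)
      (by
        have : Continuous fun t : ℝ => -2 * x₀ * Real.exp (-x₀ ^ 2 * (1 + t ^ 2)) := by continuity
        exact this.aestronglyMeasurable)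
      (Filter.Eventually.of_forall fun t _ => by
        intro x hx
        have hxb : |x| ≤ |x₀| + 1 := by
          have := abs_sub_abs_le_abs_sub x x₀
          have hd : |x - x₀| < 1 := by simpa [Real.dist_eq] using hx
          linarith
        have he : Real.exp (-x ^ 2 * (1 + t ^ 2)) ≤ 1 := by
          apply Real.exp_le_one_iff.mpr
          nlinarith [sq_nonneg x, sq_nonneg t]
        have hep : 0 < Real.exp (-x ^ 2 * (1 + t ^ 2)) := Real.exp_pos _
        have : ‖-2 * x * Real.exp (-x ^ 2 * (1 + t ^ 2))‖
            = 2 * |x| * Real.exp (-x ^ 2 * (1 + t ^ 2)) := by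
          rw [Real.norm_eq_abs, abs_mul, abs_mul]
          simp [abs_of_pos hep, abs_of_nonneg]
        rw [this]
        show 2 * |x| * Real.exp (-x ^ 2 * (1 + t ^ 2)) ≤ 2 * (|x₀| + 1)
        nlinarith [abs_nonneg x, mul_le_mul_of_nonneg_left he (by positivity : (0:ℝ) ≤ 2 * |x|)])
      (intervalIntegrable_const)
      (Filter.Eventually.of_forall fun t _ => fun x _ => hd t x)).2
  have heq : (∫ t in (0:ℝ)..1, -2 * x₀ * Real.exp (-x₀ ^ 2 * (1 + t ^ 2)))
      = -2 * x₀ * Real.exp (-x₀ ^ 2) * ∫ t in (0:ℝ)..1, Real.exp (-(x₀ * t) ^ 2) := by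
    rw [mul_assoc, ← intervalIntegral.integral_const_mul, ← intervalIntegral.integral_const_mul]
    apply intervalIntegral.integral_congr
    intro t _
    dsimp only
    rw [show -x₀ ^ 2 * (1 + t ^ 2) = -x₀ ^ 2 + -(x₀ * t) ^ 2 by ring, Real.exp_add]
  rw [heq] at h
  unfold Kf
  exact h

lemma key_identity (x : ℝ) :
    (∫ y in (0:ℝ)..x, Real.exp (-y ^ 2)) ^ 2 = Real.pi / 4 - Kf (x ^ 2) := by
  have hderiv : ∀ y : ℝ, HasDerivAt
      (fun x : ℝ => (∫ y in (0:ℝ)..x, Real.exp (-y ^ 2)) ^ 2 + Kf (x ^ 2)) 0 y := by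
    intro y
    have h1 : HasDerivAt (fun x : ℝ => (∫ y in (0:ℝ)..x, Real.exp (-y ^ 2)) ^ 2)
        (2 * (∫ u in (0:ℝ)..y, Real.exp (-u ^ 2)) * Real.exp (-y ^ 2)) y := by
      have := (hEg y).fun_pow 2
      simpa [mul_comm] using this
    have h := h1.fun_add (hasDerivAt_G y)
    refine h.congr_deriv ?_
    rw [← Eg_eq y]
    ring
  have hconst := is_const_of_deriv_eq_zero (f := fun x : ℝ =>
      (∫ y in (0:ℝ)..x, Real.exp (-y ^ 2)) ^ 2 + Kf (x ^ 2))
    (fun x => (hderiv x).differentiableAt) (fun x => (hderiv x).deriv) x 0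
  have hK0 : Kf 0 = Real.pi / 4 := by
    have h : Kf 0 = ∫ t in (0:ℝ)..1, 1 / (1 + t ^ 2) := by
      apply intervalIntegral.integral_congr
      intro t _
      simp
    rw [h, integral_one_div_one_add_sq, Real.arctan_one, Real.arctan_zero]
    ring
  simp only [intervalIntegral.integral_same, ne_eq, OfNat.ofNat_ne_zero,
    not_false_eq_true, zero_pow, zero_add] at hconst
  rw [hK0] at hconst
  linarith [hconst]

lemma erf_sq (x : ℝ) : erf x ^ 2 = 1 - (4 / Real.pi) * Kf (x ^ 2) := by
  unfold erf
  rw [mul_pow, key_identity, div_pow, Real.sq_sqrt Real.pi_pos.le]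
  have : Real.pi ≠ 0 := Real.pi_ne_zero
  field_simp
  ring

lemma erf_sqrt_sq (v : ℝ) (hv : 0 ≤ v) :
    erf (Real.sqrt v) ^ 2 = 1 - (4 / Real.pi) * Kf v := by
  rw [erf_sq, Real.sq_sqrt hv]

lemma pow_form {n : ℕ} (A : Fin n → Fin n → ℝ)
    (hsym : ∀ i j, A i j = A j i)
    (hA : ∀ c : Fin n → ℝ, 0 ≤ ∑ i, ∑ j, c i * c j * A i j) :
    ∀ (k : ℕ) (c : Fin n → ℝ), 0 ≤ ∑ i, ∑ j, c i * c j * A i j ^ k := by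
  have hpsd : (Matrix.of A).PosSemidef := by
    refine Matrix.PosSemidef.of_dotProduct_mulVec_nonneg ?_ ?_
    · ext i j
      simp only [Matrix.conjTranspose_apply, Matrix.of_apply, star_trivial]
      exact hsym j i
    · intro x
      have hx : dotProduct (star x) (Matrix.mulVec (Matrix.of A) x)
          = ∑ i, ∑ j, x i * x j * A i j := by
        simp only [dotProduct, Matrix.mulVec, Pi.star_apply, star_trivial,
          Matrix.of_apply, Finset.mul_sum]
        exact Finset.sum_congr rfl fun i _ => Finset.sum_congr rfl fun j _ => by ring
      rw [hx]
      exact hA x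
  open scoped MatrixOrder Matrix.Norms.L2Operator in
  obtain ⟨B, hB⟩ := CStarAlgebra.nonneg_iff_eq_star_mul_self.mp hpsd.nonneg
  have hAB : ∀ i j, A i j = ∑ l, B l i * B l j := by
    intro i j
    have := congrFun (congrFun hB i) j
    simpa [Matrix.mul_apply, Matrix.conjTranspose_apply] using this
  intro k
  induction k with
  | zero =>
    intro c
    simp only [pow_zero, mul_one]
    have h : ∑ i, ∑ j, c i * c j = (∑ i, c i) ^ 2 := by
      rw [sq, Finset.sum_mul_sum]
    rw [h]
    positivity
  | succ k ih =>
    intro c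
    have h1 : ∀ i j : Fin n, c i * c j * A i j ^ (k + 1)
        = ∑ l, (c i * B l i) * (c j * B l j) * A i j ^ k := by
      intro i j
      calc c i * c j * A i j ^ (k + 1)
          = c i * c j * A i j ^ k * A i j := by ring
        _ = c i * c j * A i j ^ k * (∑ l, B l i * B l j) := by rw [← hAB i j]
        _ = ∑ l, (c i * B l i) * (c j * B l j) * A i j ^ k := by
            rw [Finset.mul_sum]
            exact Finset.sum_congr rfl fun l _ => by ring
    calc (0:ℝ) ≤ ∑ l, ∑ i, ∑ j, (c i * B l i) * (c j * B l j) * A i j ^ k :=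
          Finset.sum_nonneg fun l _ => ih (fun i => c i * B l i)
      _ = ∑ i, ∑ l, ∑ j, (c i * B l i) * (c j * B l j) * A i j ^ k := Finset.sum_comm
      _ = ∑ i, ∑ j, ∑ l, (c i * B l i) * (c j * B l j) * A i j ^ k :=
          Finset.sum_congr rfl fun i _ => Finset.sum_comm
      _ = ∑ i, ∑ j, c i * c j * A i j ^ (k + 1) :=
          Finset.sum_congr rfl fun i _ => Finset.sum_congr rfl fun j _ => (h1 i j).symm

lemma exp_form {n : ℕ} (A : Fin n → Fin n → ℝ)
    (hsym : ∀ i j, A i j = A j i)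
    (hA : ∀ c : Fin n → ℝ, 0 ≤ ∑ i, ∑ j, c i * c j * A i j)
    {μ : ℝ} (hμ : 0 ≤ μ) (c : Fin n → ℝ) :
    (∑ i, c i) ^ 2 ≤ ∑ i, ∑ j, c i * c j * Real.exp (μ * A i j) := by
  have hsum1 : ∀ i j : Fin n,
      Summable (fun k : ℕ => c i * c j * ((μ * A i j) ^ k / Nat.factorial k)) :=
    fun i j => (Real.summable_pow_div_factorial _).mul_left _
  have hexp : ∀ i j : Fin n, c i * c j * Real.exp (μ * A i j)
      = ∑' k : ℕ, c i * c j * ((μ * A i j) ^ k / Nat.factorial k) := by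
    intro i j
    rw [Real.exp_eq_exp_ℝ, NormedSpace.exp_eq_tsum_div]
    exact (tsum_mul_left).symm
  have h2 : ∀ i : Fin n,
      Summable (fun k : ℕ => ∑ j, c i * c j * ((μ * A i j) ^ k / Nat.factorial k)) :=
    fun i => summable_sum fun j _ => hsum1 i j
  have h3 : Summable (fun k : ℕ => ∑ i, ∑ j, c i * c j * ((μ * A i j) ^ k / Nat.factorial k)) :=
    summable_sum fun i _ => h2 i
  have swap : ∑ i, ∑ j, c i * c j * Real.exp (μ * A i j)
      = ∑' k : ℕ, ∑ i, ∑ j, c i * c j * ((μ * A i j) ^ k / Nat.factorial k) := by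
    simp_rw [hexp]
    rw [Finset.sum_congr rfl fun i _ => (Summable.tsum_finsetSum fun j _ => hsum1 i j).symm]
    exact (Summable.tsum_finsetSum fun i _ => h2 i).symm
  rw [swap]
  have hterm : ∀ k : ℕ, ∑ i, ∑ j, c i * c j * ((μ * A i j) ^ k / Nat.factorial k)
      = (μ ^ k / Nat.factorial k) * ∑ i, ∑ j, c i * c j * A i j ^ k := by
    intro k
    simp_rw [Finset.mul_sum]
    exact Finset.sum_congr rfl fun i _ => Finset.sum_congr rfl fun j _ => by
      rw [mul_pow]; ring
  have h0 : (∑ i, ∑ j, c i * c j * ((μ * A i j) ^ 0 / Nat.factorial 0))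
      = (∑ i, c i) ^ 2 := by
    simp only [pow_zero, Nat.factorial_zero, Nat.cast_one, div_one, mul_one]
    rw [sq, Finset.sum_mul_sum]
  calc (∑ i, c i) ^ 2
      = ∑ i, ∑ j, c i * c j * ((μ * A i j) ^ 0 / Nat.factorial 0) := h0.symm
    _ ≤ ∑' k : ℕ, ∑ i, ∑ j, c i * c j * ((μ * A i j) ^ k / Nat.factorial k) := by
        apply Summable.le_tsum h3 0
        intro k _
        rw [hterm k]
        exact mul_nonneg (by positivity) (pow_form A hsym hA k c)

end SCorrAux

open SCorrAux in
/-- If `ρ₀` is a correlation function on `ℝ^d`, `α ∈ [0,1]`, `λ > 0` with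
`erf(√(λ(1-α)/8)) ≤ 1/√2`, and `ρ = (1-α)ρ₀ + α`, then
`x ↦ 1 - 2 (erf(√(λ(1-ρ(x))/8)))²` is again a correlation function. -/
theorem S_transform_of_correlation (d : ℕ) (hd : 1 ≤ d)
    (ρ₀ : EuclideanSpace ℝ (Fin d) → ℝ) (hρ₀ : IsCorrelationFunction d ρ₀)
    (α l : ℝ) (hα : α ∈ Set.Icc (0:ℝ) 1) (hl : 0 < l)
    (hbound : erf (Real.sqrt (l * (1 - α) / 8)) ≤ 1 / Real.sqrt 2) :
    IsCorrelationFunction d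
      (fun x => 1 - 2 *
        (erf (Real.sqrt (l * (1 - ((1 - α) * ρ₀ x + α)) / 8))) ^ 2) := by
  obtain ⟨hcont, h0, hev, hpd⟩ := hρ₀
  obtain ⟨hα0, hα1⟩ := hα
  set β : ℝ := l * (1 - α) / 8 with hβdef
  have hβ : 0 ≤ β := by
    rw [hβdef]
    have : (0:ℝ) ≤ 1 - α := by linarith
    positivity
  have hle1 : ∀ x, ρ₀ x ≤ 1 := by
    intro x
    have h := hpd 2 ![0, x] ![1, -1]
    simp only [Fin.sum_univ_two, Matrix.cons_val_zero, Matrix.cons_val_one, Matrix.head_cons,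
      sub_self, sub_zero, zero_sub, h0, hev] at h
    linarith
  have herfβ : erf (Real.sqrt β) ^ 2 ≤ 1 / 2 := by
    have h1 : 0 ≤ erf (Real.sqrt β) := erf_nonneg _ (Real.sqrt_nonneg _)
    have hb : (1 / Real.sqrt 2) ^ 2 = 1 / 2 := by
      rw [div_pow, one_pow, Real.sq_sqrt]; norm_num
    calc erf (Real.sqrt β) ^ 2 ≤ (1 / Real.sqrt 2) ^ 2 := pow_le_pow_left₀ h1 hbound 2
      _ = 1 / 2 := hb
  refine ⟨?_, ?_, ?_, ?_⟩
  · -- continuity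
    have h1 : Continuous fun x : EuclideanSpace ℝ (Fin d) =>
        l * (1 - ((1 - α) * ρ₀ x + α)) / 8 := by fun_prop
    have h2 : Continuous fun x : EuclideanSpace ℝ (Fin d) =>
        erf (Real.sqrt (l * (1 - ((1 - α) * ρ₀ x + α)) / 8)) :=
      continuous_erf.comp (Real.continuous_sqrt.comp h1)
    exact continuous_const.sub (continuous_const.mul (h2.pow 2))
  · -- value at 0
    show 1 - 2 * erf (Real.sqrt (l * (1 - ((1 - α) * ρ₀ 0 + α)) / 8)) ^ 2 = 1
    rw [h0, show l * (1 - ((1 - α) * 1 + α)) / 8 = 0 by ring, Real.sqrt_zero, erf_zero]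
    norm_num
  · -- even
    intro x
    simp only [hev x]
  · -- positive definite
    intro n t c
    dsimp only
    have hAsym : ∀ i j : Fin n, ρ₀ (t i - t j) = ρ₀ (t j - t i) := by
      intro i j
      rw [← hev (t j - t i), neg_sub]
    have hterm : ∀ i j : Fin n,
        (1 - 2 * erf (Real.sqrt (l * (1 - ((1 - α) * ρ₀ (t i - t j) + α)) / 8)) ^ 2)
          = -1 + (8 / Real.pi) * Kf (β * (1 - ρ₀ (t i - t j))) := by
      intro i j
      have hv : 0 ≤ β * (1 - ρ₀ (t i - t j)) :=
        mul_nonneg hβ (by linarith [hle1 (t i - t j)])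
      rw [show l * (1 - ((1 - α) * ρ₀ (t i - t j) + α)) / 8 = β * (1 - ρ₀ (t i - t j)) by
        rw [hβdef]; ring]
      rw [erf_sqrt_sq _ hv]
      ring
    have step1 : ∑ i, ∑ j, c i * c j *
          (1 - 2 * erf (Real.sqrt (l * (1 - ((1 - α) * ρ₀ (t i - t j) + α)) / 8)) ^ 2)
        = -(∑ i, c i) ^ 2
          + (8 / Real.pi) * ∑ i, ∑ j, c i * c j * Kf (β * (1 - ρ₀ (t i - t j))) := by
      calc ∑ i, ∑ j, c i * c j *
            (1 - 2 * erf (Real.sqrt (l * (1 - ((1 - α) * ρ₀ (t i - t j) + α)) / 8)) ^ 2)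
          = ∑ i, ∑ j, (-(c i * c j)
              + (8 / Real.pi) * (c i * c j * Kf (β * (1 - ρ₀ (t i - t j))))) :=
            Finset.sum_congr rfl fun i _ => Finset.sum_congr rfl fun j _ => by
              rw [hterm i j]; ring
        _ = -(∑ i, c i) ^ 2
            + (8 / Real.pi) * ∑ i, ∑ j, c i * c j * Kf (β * (1 - ρ₀ (t i - t j))) := by
            simp only [Finset.sum_add_distrib, Finset.sum_neg_distrib, ← Finset.mul_sum]
            rw [sq, Finset.sum_mul_sum]
            simp only [Finset.mul_sum]
    -- pointwise lower bound for the integrand sum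
    have hpt : ∀ s : ℝ, (∑ i, c i) ^ 2 * (Real.exp (-β * (1 + s ^ 2)) / (1 + s ^ 2))
        ≤ ∑ i, ∑ j, c i * c j *
            (Real.exp (-(β * (1 - ρ₀ (t i - t j))) * (1 + s ^ 2)) / (1 + s ^ 2)) := by
      intro s
      have hμ : 0 ≤ β * (1 + s ^ 2) := by positivity
      have hw : 0 < Real.exp (-β * (1 + s ^ 2)) / (1 + s ^ 2) := by positivity
      have hform := exp_form (fun i j => ρ₀ (t i - t j)) hAsym (fun c' => hpd n t c') hμ c
      have hwrw : ∀ i j : Fin n, c i * c j *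
            (Real.exp (-(β * (1 - ρ₀ (t i - t j))) * (1 + s ^ 2)) / (1 + s ^ 2))
          = (Real.exp (-β * (1 + s ^ 2)) / (1 + s ^ 2))
              * (c i * c j * Real.exp (β * (1 + s ^ 2) * ρ₀ (t i - t j))) := by
        intro i j
        rw [show -(β * (1 - ρ₀ (t i - t j))) * (1 + s ^ 2)
            = -β * (1 + s ^ 2) + β * (1 + s ^ 2) * ρ₀ (t i - t j) by ring, Real.exp_add]
        ring
      have hS : ∑ i, ∑ j, c i * c j *
            (Real.exp (-(β * (1 - ρ₀ (t i - t j))) * (1 + s ^ 2)) / (1 + s ^ 2))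
          = (Real.exp (-β * (1 + s ^ 2)) / (1 + s ^ 2))
              * ∑ i, ∑ j, c i * c j * Real.exp (β * (1 + s ^ 2) * ρ₀ (t i - t j)) := by
        simp_rw [hwrw, ← Finset.mul_sum]
      rw [hS]
      calc (∑ i, c i) ^ 2 * (Real.exp (-β * (1 + s ^ 2)) / (1 + s ^ 2))
          = (Real.exp (-β * (1 + s ^ 2)) / (1 + s ^ 2)) * (∑ i, c i) ^ 2 := by ring
        _ ≤ _ := mul_le_mul_of_nonneg_left hform hw.le
    -- integrate the pointwise bound
    have step2 : (∑ i, c i) ^ 2 * Kf β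
        ≤ ∑ i, ∑ j, c i * c j * Kf (β * (1 - ρ₀ (t i - t j))) := by
      have hint : ∀ i j : Fin n, IntervalIntegrable (fun s : ℝ => c i * c j *
          (Real.exp (-(β * (1 - ρ₀ (t i - t j))) * (1 + s ^ 2)) / (1 + s ^ 2)))
          MeasureTheory.volume 0 1 :=
        fun i j => (continuous_const.mul (contK _)).intervalIntegrable 0 1
      have hint2 : ∀ i : Fin n, IntervalIntegrable (fun s : ℝ => ∑ j, c i * c j *
          (Real.exp (-(β * (1 - ρ₀ (t i - t j))) * (1 + s ^ 2)) / (1 + s ^ 2)))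
          MeasureTheory.volume 0 1 := by
        intro i
        apply Continuous.intervalIntegrable
        exact continuous_finset_sum _ fun j _ => continuous_const.mul (contK _)
      calc (∑ i, c i) ^ 2 * Kf β
          = ∫ s in (0:ℝ)..1, (∑ i, c i) ^ 2
              * (Real.exp (-β * (1 + s ^ 2)) / (1 + s ^ 2)) :=
            (intervalIntegral.integral_const_mul _ _).symm
        _ ≤ ∫ s in (0:ℝ)..1, ∑ i, ∑ j, c i * c j *
              (Real.exp (-(β * (1 - ρ₀ (t i - t j))) * (1 + s ^ 2)) / (1 + s ^ 2)) := by
            apply intervalIntegral.integral_mono_on (by norm_num)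
            · exact (continuous_const.mul (contK β)).intervalIntegrable 0 1
            · apply Continuous.intervalIntegrable
              exact continuous_finset_sum _ fun i _ =>
                continuous_finset_sum _ fun j _ => continuous_const.mul (contK _)
            · intro s _
              exact hpt s
        _ = ∑ i, ∑ j, c i * c j * Kf (β * (1 - ρ₀ (t i - t j))) := by
            rw [intervalIntegral.integral_finset_sum (fun i _ => hint2 i)]
            refine Finset.sum_congr rfl fun i _ => ?_
            rw [intervalIntegral.integral_finset_sum (fun j _ => hint i j)]
            exact Finset.sum_congr rfl fun j _ =>
              (intervalIntegral.integral_const_mul _ _)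
    have hpi : (0:ℝ) < 8 / Real.pi := by positivity
    have hfin : -(∑ i, c i) ^ 2 + (8 / Real.pi) * ((∑ i, c i) ^ 2 * Kf β)
        = (∑ i, c i) ^ 2 * (1 - 2 * erf (Real.sqrt β) ^ 2) := by
      rw [erf_sqrt_sq β hβ]
      ring
    have h8 := mul_le_mul_of_nonneg_left step2 hpi.le
    rw [step1]
    nlinarith [sq_nonneg (∑ i, c i), herfβ, hfin, h8]
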